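/- Let h be a real number with h ≠ −k/2 for every integer k ≥ 0. Suppose M_n (n ∈ ℤ) is any family of ℂ-linear endomorphisms of ℂ[z] such that M₋₁ = l₋₁, M₀ = l₀, M₁ = l₁, and [l_i, M_n] = (i − n)·M_{i+n} for every i ∈ {−1, 0, 1} and every n ∈ ℤ. Then M_n = L_n for all n ∈ ℤ (uniqueness of the q_R-conformal symmetries). -/

import Mathlib

open Polynomial

noncomputable section

/-- Operators (ℂ-linear endomorphisms) on ℂ[z], realized as `Polynomial ℂ`. -/
abbrev E : Type := Module.End ℂ (Polynomial ℂ)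

/-- The differentiation operator `D(p) = p'`. -/
def Dop : E := Polynomial.derivative

/-- Multiplication by `z`. -/
def Mz : E := LinearMap.mulLeft ℂ (X : Polynomial ℂ)

/-- `l₋₁(p) = z·p`. -/
def lm1 : E := Mz

/-- `l₀(p) = z·p' + h·p`. -/
def l0 (h : ℝ) : E := Mz * Dop + (h : ℂ) • (1 : E)

/-- `l₁(p) = z·p'' + 2h·p'`. -/
def l1 (h : ℝ) : E := Mz * Dop ^ 2 + ((2 * h : ℝ) : ℂ) • Dop

/-- Commutator `[A,B] = A∘B − B∘A`. -/
def opComm (A B : E) : E := A * B - B * A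

/-- The weight `w h n = n!·(2h)(2h+1)⋯(2h+n−1)`, i.e. the squared norm `⟨zⁿ, zⁿ⟩`
in the unitarizable Verma module. -/
def w (h : ℝ) (n : ℕ) : ℝ := (n.factorial : ℝ) * ∏ i ∈ Finset.range n, (2 * h + (i : ℝ))

set_option maxHeartbeats 1000000

/- ## Auxiliary lemmas -/

lemma Mz_apply (p : Polynomial ℂ) : Mz p = X * p := rfl

lemma Dop_pow_apply (k n : ℕ) : (Dop ^ k) (X ^ n : Polynomial ℂ)
    = (n.descFactorial k : ℂ) • X ^ (n - k) := by
  rw [Module.End.pow_apply]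
  show derivative^[k] _ = _
  rw [Polynomial.iterate_derivative_X_pow_eq_smul]

lemma ext_mono {f g : E} (hfg : ∀ n : ℕ, f (X ^ n) = g (X ^ n)) : f = g := by
  apply LinearMap.ext
  intro p
  induction p using Polynomial.induction_on' with
  | add p q hp hq => simp [map_add, hp, hq]
  | monomial n a => rw [← smul_X_eq_monomial, map_smul, map_smul, hfg]

lemma lm1_apply (n : ℕ) : lm1 (X ^ n : Polynomial ℂ) = X ^ (n + 1) := by
  show X * X ^ n = _
  ring

lemma l0_apply (h : ℝ) (n : ℕ) : l0 h (X ^ n : Polynomial ℂ) = ((n : ℂ) + h) • X ^ n := by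
  show Mz (Dop (X ^ n)) + (h : ℂ) • (X ^ n) = _
  have h1 : Dop (X ^ n) = (n.descFactorial 1 : ℂ) • X ^ (n - 1) := by
    rw [← pow_one Dop, Dop_pow_apply]
  rw [h1]
  cases n with
  | zero => simp
  | succ m =>
      rw [Mz_apply]
      simp only [Nat.descFactorial, Nat.succ_sub_one]
      push_cast
      rw [mul_smul_comm, ← pow_succ', ← add_smul]
      ring_nf

lemma l1_apply (h : ℝ) (n : ℕ) :
    l1 h (X ^ n : Polynomial ℂ) = ((n : ℂ) * ((n : ℂ) - 1 + 2 * h)) • X ^ (n - 1) := by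
  show Mz ((Dop ^ 2) (X ^ n)) + ((2 * h : ℝ) : ℂ) • Dop (X ^ n) = _
  have h2 := Dop_pow_apply 2 n
  have h1 : Dop (X ^ n) = (n.descFactorial 1 : ℂ) • X ^ (n - 1) := by
    rw [← pow_one Dop, Dop_pow_apply]
  rw [h1, h2]
  clear h1 h2
  match n with
  | 0 => simp
  | 1 => simp [Mz_apply]
  | (m+2) =>
      rw [Mz_apply]
      simp only [Nat.descFactorial]
      push_cast
      rw [mul_smul_comm, ← pow_succ', smul_smul, ← add_smul]
      congr 1
      ring

lemma l0_apply_poly (h : ℝ) (p : Polynomial ℂ) :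
    l0 h p = X * derivative p + (h : ℂ) • p := rfl

lemma DM_comm : Dop * Mz = Mz * Dop + 1 := by
  apply LinearMap.ext
  intro p
  simp only [Module.End.mul_apply, LinearMap.add_apply, Module.End.one_apply, Dop, Mz,
    LinearMap.mulLeft_apply]
  simp [mul_comm]

lemma key2 : ∀ j : ℕ, Dop ^ (j + 1) * Mz = Mz * Dop ^ (j + 1) + ((j : ℂ) + 1) • Dop ^ j := by
  intro j
  induction j with
  | zero => simpa using DM_comm
  | succ j ih =>
      have : Dop ^ (j + 2) * Mz = Dop ^ (j + 1) * (Dop * Mz) := by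
        rw [← mul_assoc, ← pow_succ]
      rw [this, DM_comm, mul_add, mul_one, ← mul_assoc, ih, add_mul, smul_mul_assoc,
        mul_assoc, ← pow_succ, ← pow_succ]
      push_cast
      module

lemma MM (a b : ℕ) : (Mz * Dop ^ (a+1)) * (Mz * Dop ^ b)
    = Mz * Mz * Dop ^ (a+1+b) + ((a:ℂ)+1) • (Mz * Dop ^ (a+b)) := by
  have : (Mz * Dop ^ (a+1)) * (Mz * Dop ^ b) = Mz * ((Dop ^ (a+1) * Mz) * Dop ^ b) := by
    noncomm_ring
  rw [this, key2 a, add_mul, mul_add, smul_mul_assoc, mul_smul_comm, mul_assoc Mz (Dop ^ (a+1)),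
    ← pow_add, ← pow_add]
  noncomm_ring

lemma DM (a b : ℕ) : Dop ^ (a+1) * (Mz * Dop ^ b)
    = Mz * Dop ^ (a+1+b) + ((a:ℂ)+1) • Dop ^ (a+b) := by
  have : Dop ^ (a+1) * (Mz * Dop ^ b) = (Dop ^ (a+1) * Mz) * Dop ^ b := by noncomm_ring
  rw [this, key2 a, add_mul, smul_mul_assoc, mul_assoc Mz (Dop ^ (a+1)), ← pow_add, ← pow_add]

lemma opComm_sub (A B C : E) : opComm A (B - C) = opComm A B - opComm A C := by
  unfold opComm
  rw [mul_sub, sub_mul]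
  abel

/- nonvanishing facts -/

lemma nz (h : ℝ) (hh : ∀ k : ℕ, h ≠ -(k : ℝ) / 2) (a : ℕ) : ((a : ℂ) + 2 * (h : ℂ)) ≠ 0 := by
  have hr : (a : ℝ) + 2 * h ≠ 0 := by
    intro H
    exact hh a (by linarith)
  have : ((a : ℂ) + 2 * (h : ℂ)) = (((a : ℝ) + 2 * h : ℝ) : ℂ) := by push_cast; ring
  rw [this, ne_eq, Complex.ofReal_eq_zero]
  exact hr

lemma nz2 (h : ℝ) (hh : ∀ k : ℕ, h ≠ -(k : ℝ) / 2) (n i : ℕ) :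
    ((n : ℂ) + 2 * (h : ℂ) + (i : ℂ)) ≠ 0 := by
  have := nz h hh (n + i)
  push_cast at this
  intro H
  apply this
  linear_combination H

lemma prodP_ne (h : ℝ) (hh : ∀ k : ℕ, h ≠ -(k : ℝ) / 2) (n k : ℕ) :
    (∏ i ∈ Finset.range k, ((n : ℂ) + 2 * (h : ℂ) + (i : ℂ))) ≠ 0 :=
  Finset.prod_ne_zero_iff.mpr (fun i _ => nz2 h hh n i)

/- ## positive-side commutation relations for the explicit operators -/

lemma rel1pos (h : ℝ) (j : ℕ) :
    opComm (l1 h) (Mz * Dop ^ (j+3) + (((j:ℂ)+3) * (h:ℂ)) • Dop ^ (j+2))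
      = ((-1:ℂ) - (j:ℂ)) • (Mz * Dop ^ (j+4) + (((j:ℂ)+4) * (h:ℂ)) • Dop ^ (j+3)) := by
  have hc : ((2 * h : ℝ) : ℂ) = 2 * (h:ℂ) := by push_cast; ring
  unfold opComm l1
  rw [hc]
  have E1 : Mz * Dop ^ 2 * (Mz * Dop ^ (j+3))
      = Mz * Mz * Dop ^ (j+5) + (2:ℂ) • (Mz * Dop ^ (j+4)) := by
    have t := MM 1 (j+3)
    rw [show 1+1+(j+3) = j+5 by omega, show 1+(j+3) = j+4 by omega] at t
    norm_num at t
    exact t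
  have E5 : Mz * Dop ^ (j+3) * (Mz * Dop ^ 2)
      = Mz * Mz * Dop ^ (j+5) + ((j:ℂ)+2+1) • (Mz * Dop ^ (j+4)) := by
    have t := MM (j+2) 2
    rw [show j+2+1 = j+3 by omega, show j+2+1+2 = j+5 by omega,
      show j+2+2 = j+4 by omega] at t
    push_cast at t
    exact t
  have E3 : Dop * (Mz * Dop ^ (j+3)) = Mz * Dop ^ (j+4) + Dop ^ (j+3) := by
    have t := DM 0 (j+3)
    rw [show 0+1+(j+3) = j+4 by omega, show 0+(j+3) = j+3 by omega] at t
    norm_num at t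
    exact t
  have E7 : Dop ^ (j+2) * (Mz * Dop ^ 2) = Mz * Dop ^ (j+4) + ((j:ℂ)+1+1) • Dop ^ (j+3) := by
    have t := DM (j+1) 2
    rw [show j+1+1 = j+2 by omega, show j+1+1+2 = j+4 by omega,
      show j+1+2 = j+3 by omega] at t
    push_cast at t
    exact t
  have E2 : Mz * Dop ^ 2 * Dop ^ (j+2) = Mz * Dop ^ (j+4) := by
    rw [mul_assoc, ← pow_add, show 2+(j+2) = j+4 by omega]
  have E4 : Dop * Dop ^ (j+2) = Dop ^ (j+3) := by
    rw [← pow_succ']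
  have E6 : Mz * Dop ^ (j+3) * Dop = Mz * Dop ^ (j+4) := by
    rw [mul_assoc, ← pow_succ]
  have E8 : Dop ^ (j+2) * Dop = Dop ^ (j+3) := by rw [← pow_succ]
  simp only [add_mul, mul_add, smul_mul_assoc, mul_smul_comm, smul_smul]
  rw [E1, E5, E3, E7, E2, E4, E6, E8]
  module

lemma relm1pos2 (h : ℝ) :
    opComm lm1 (Mz * Dop ^ 3 + (3 * (h:ℂ)) • Dop ^ 2)
      = (-3:ℂ) • (Mz * Dop ^ 2 + (2 * (h:ℂ)) • Dop) := by
  unfold opComm lm1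
  have K2 : Dop ^ 3 * Mz = Mz * Dop ^ 3 + (3:ℂ) • Dop ^ 2 := by
    have t := key2 2
    norm_num at t
    exact t
  have K1 : Dop ^ 2 * Mz = Mz * Dop ^ 2 + (2:ℂ) • Dop := by
    have t := key2 1
    norm_num [pow_one] at t
    exact t
  simp only [add_mul, mul_add, smul_mul_assoc, mul_smul_comm, smul_smul]
  rw [mul_assoc Mz (Dop ^ 3) Mz, K2, K1, mul_add Mz (Mz * Dop ^ 3), mul_smul_comm]
  module

lemma rel0pos2 (h : ℝ) :
    opComm (l0 h) (Mz * Dop ^ 3 + (3 * (h:ℂ)) • Dop ^ 2)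
      = (-2:ℂ) • (Mz * Dop ^ 3 + (3 * (h:ℂ)) • Dop ^ 2) := by
  unfold opComm l0
  have E1 : Mz * Dop * (Mz * Dop ^ 3) = Mz * Mz * Dop ^ 4 + (1:ℂ) • (Mz * Dop ^ 3) := by
    have t := MM 0 3
    rw [show 0+1+3 = 4 by omega, show 0+3 = 3 by omega] at t
    norm_num [pow_one] at t
    simpa using t
  have E2 : Mz * Dop * Dop ^ 2 = Mz * Dop ^ 3 := by
    rw [mul_assoc, ← pow_succ']
  have E3 : Mz * Dop ^ 3 * (Mz * Dop) = Mz * Mz * Dop ^ 4 + (3:ℂ) • (Mz * Dop ^ 3) := by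
    have t := MM 2 1
    rw [show 2+1+1 = 4 by omega, show 2+1 = 3 by omega] at t
    norm_num [pow_one] at t
    exact t
  have E4 : Dop ^ 2 * (Mz * Dop) = Mz * Dop ^ 3 + (2:ℂ) • Dop ^ 2 := by
    have t := DM 1 1
    rw [show 1+1+1 = 3 by omega, show 1+1 = 2 by omega] at t
    norm_num [pow_one] at t
    exact t
  simp only [add_mul, mul_add, smul_mul_assoc, mul_smul_comm, smul_smul, mul_one, one_mul]
  rw [E1, E2, E3, E4]
  module

/- ## negative-side lemmas -/

section Neg

variable (h : ℝ) (hh : ∀ k : ℕ, h ≠ -(k : ℝ) / 2) (L : ℤ → E)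
variable (hLneg : ∀ k : ℕ, 1 ≤ k → ∀ n : ℕ,
      L (-(k : ℤ)) (X ^ n) =
        (((n : ℂ) + ((k : ℂ) + 1) * (h : ℂ)) /
            ∏ i ∈ Finset.range k, ((n : ℂ) + 2 * h + (i : ℂ))) • X ^ (n + k))

include hh hLneg

lemma Lm1_eq : L (-1) = lm1 := by
  apply ext_mono
  intro n
  have t := hLneg 1 (by omega) n
  norm_num [Finset.prod_range_one] at t
  rw [t, lm1_apply, div_self (nz h hh n), one_smul]

lemma neg_lm1 (k : ℕ) (hk : 1 ≤ k) :
    opComm lm1 (L (-(k:ℤ))) = ((k:ℂ) - 1) • L (-((k:ℤ)+1)) := by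
  apply ext_mono
  intro m
  simp only [opComm, LinearMap.sub_apply, Module.End.mul_apply, LinearMap.smul_apply]
  have hk1 := hLneg (k+1) (by omega) m
  push_cast at hk1
  rw [hLneg k hk m, lm1_apply m, hLneg k hk (m+1), map_smul, lm1_apply, hk1,
    show m+1+k = m+k+1 by omega, show m+(k+1) = m+k+1 by omega]
  rw [smul_smul, ← sub_smul]
  congr 1
  have hQ := prodP_ne h hh m k
  have hR := prodP_ne h hh (m+1) k
  have hm := nz h hh m
  have hmk := nz2 h hh m k
  have hS1 : ∏ i ∈ Finset.range (k+1), ((m:ℂ) + 2*h + (i:ℂ))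
      = (∏ i ∈ Finset.range k, ((m:ℂ) + 2*h + (i:ℂ))) * ((m:ℂ) + 2*h + (k:ℂ)) :=
    Finset.prod_range_succ _ k
  have hS2 : ∏ i ∈ Finset.range (k+1), ((m:ℂ) + 2*h + (i:ℂ))
      = ((m:ℂ) + 2*h) * ∏ i ∈ Finset.range k, (((m+1:ℕ):ℂ) + 2*h + (i:ℂ)) := by
    rw [Finset.prod_range_succ']
    have h0 : ((m:ℂ) + 2*(h:ℂ) + ((0:ℕ):ℂ)) = ((m:ℂ) + 2*(h:ℂ)) := by push_cast; ring
    rw [h0, mul_comm]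
    congr 1
    refine Finset.prod_congr rfl fun i _ => ?_
    push_cast
    ring
  have hrel : (∏ i ∈ Finset.range k, ((m:ℂ) + 2*h + (i:ℂ))) * ((m:ℂ) + 2*h + (k:ℂ))
      = ((m:ℂ) + 2*h) * ∏ i ∈ Finset.range k, (((m+1:ℕ):ℂ) + 2*h + (i:ℂ)) := by
    rw [← hS1, hS2]
  rw [hS1]
  push_cast at hrel hR ⊢
  rw [div_sub_div _ _ hQ hR, ← mul_div_assoc,
    div_eq_div_iff (mul_ne_zero hQ hR) (mul_ne_zero hQ hmk)]
  linear_combination (-((m:ℂ) + 1 + ((k:ℂ)+1)*(h:ℂ)) * (∏ i ∈ Finset.range k, ((m:ℂ) + 2*(h:ℂ) + (i:ℂ)))) * hrel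

lemma neg_l0 (k : ℕ) (hk : 1 ≤ k) :
    opComm (l0 h) (L (-(k:ℤ))) = (k:ℂ) • L (-(k:ℤ)) := by
  apply ext_mono
  intro m
  simp only [opComm, LinearMap.sub_apply, Module.End.mul_apply, LinearMap.smul_apply]
  rw [hLneg k hk m, l0_apply h m, map_smul, map_smul, hLneg k hk m, l0_apply h (m+k),
    smul_smul, smul_smul, smul_smul, ← sub_smul]
  congr 1
  push_cast
  ring

lemma neg_l1_2 : opComm (l1 h) (L (-2)) = (3:ℂ) • L (-1) := by
  apply ext_mono
  intro m
  simp only [opComm, LinearMap.sub_apply, Module.End.mul_apply, LinearMap.smul_apply]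
  cases m with
  | zero =>
      have z : l1 h ((X : Polynomial ℂ) ^ 0) = 0 := by
        rw [l1_apply]
        norm_num
      have t2 := hLneg 2 (by omega) 0
      have t1 := hLneg 1 (by omega) 0
      rw [Finset.prod_range_succ, Finset.prod_range_one] at t2
      rw [Finset.prod_range_one] at t1
      push_cast at t2 t1
      rw [t2, map_smul, l1_apply, z, map_zero, sub_zero, t1]
      have hA : (2*(h:ℂ)) ≠ 0 := by
        have := nz h hh 0
        push_cast at this
        simpa using this
      have hB : (2*(h:ℂ)+1) ≠ 0 := by
        have := nz2 h hh 0 1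
        push_cast at this
        intro H
        apply this
        linear_combination H
      rw [show (2:ℕ)-1 = 1 from rfl, smul_smul, smul_smul]
      congr 1
      push_cast
      have hh0 : (h:ℂ) ≠ 0 := by
        intro H
        apply hA
        rw [H, mul_zero]
      simp only [zero_add, add_zero]
      field_simp
      ring
  | succ j =>
      have t2a := hLneg 2 (by omega) (j+1)
      have t2b := hLneg 2 (by omega) j
      have t1 := hLneg 1 (by omega) (j+1)
      rw [Finset.prod_range_succ, Finset.prod_range_one] at t2a t2b
      rw [Finset.prod_range_one] at t1
      push_cast at t2a t2b t1
      rw [t2a, map_smul, l1_apply, show j+1+2-1 = j+2 by omega, l1_apply,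
        show j+1-1 = j by omega, map_smul, t2b, t1, show j+1+1 = j+2 by omega]
      have hA := nz h hh j
      have hB : ((j:ℂ) + 2*(h:ℂ) + 1) ≠ 0 := by
        have := nz2 h hh j 1
        push_cast at this
        exact this
      have hC : ((j:ℂ) + 1 + 2*(h:ℂ)) ≠ 0 := by
        have := nz h hh (j+1)
        push_cast at this
        intro H
        apply this
        linear_combination H
      have hD : ((j:ℂ) + 1 + 2*(h:ℂ) + 1) ≠ 0 := by
        have := nz2 h hh (j+1) 1
        push_cast at this
        intro H
        apply this
        linear_combination H
      rw [smul_smul, smul_smul, smul_smul, ← sub_smul]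
      congr 1
      push_cast
      simp only [zero_add, add_zero]
      field_simp
      ring

end Neg

/- ## kernel lemmas -/

lemma ker1 (h : ℝ) (A : E) (h1 : opComm lm1 A = 0) (h2 : opComm (l0 h) A = (-2:ℂ) • A) :
    A = 0 := by
  unfold opComm at h1 h2
  have h1' : lm1 * A = A * lm1 := sub_eq_zero.mp h1
  have hcomm : ∀ p : Polynomial ℂ, X * A p = A (X * p) := by
    intro p
    have := LinearMap.ext_iff.mp h1' p
    simpa [Module.End.mul_apply, Mz_apply, lm1] using this
  have hA1 : A 1 = 0 := by
    have e2 := LinearMap.ext_iff.mp h2 1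
    have e0 : (l0 h) (1 : Polynomial ℂ) = (h:ℂ) • 1 := by
      rw [l0_apply_poly]
      simp
    rw [LinearMap.sub_apply, Module.End.mul_apply, Module.End.mul_apply, e0, map_smul,
      LinearMap.smul_apply, l0_apply_poly] at e2
    set q := A 1 with hq
    have e3 : ∀ k : ℕ, (X * derivative q).coeff k = (-2:ℂ) * q.coeff k := by
      intro k
      have := congrArg (fun r => r.coeff k) e2
      simp only [coeff_add, coeff_sub, coeff_smul, smul_eq_mul] at this
      linear_combination this
    have key : ∀ n : ℕ, q.coeff n = 0 := by
      intro n
      cases n with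
      | zero =>
          have t := e3 0
          rw [coeff_X_mul_zero] at t
          have : q.coeff 0 = 0 := by linear_combination t / 2
          exact this
      | succ n =>
          have t := e3 (n+1)
          rw [coeff_X_mul, coeff_derivative] at t
          have hne : ((n:ℂ) + 3) ≠ 0 := by
            have : ((n:ℂ)+3) = ((n+3:ℕ):ℂ) := by push_cast; ring
            rw [this, Ne, Nat.cast_eq_zero]
            omega
          have t2 : ((n:ℂ) + 3) * q.coeff (n+1) = 0 := by
            push_cast at t
            linear_combination t
          exact (mul_eq_zero.mp t2).resolve_left hne
    have hq0 : q = 0 := Polynomial.ext fun n => by rw [key n, coeff_zero]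
    exact hq0
  have hXn : ∀ n : ℕ, A (X ^ n) = 0 := by
    intro n
    induction n with
    | zero => simpa using hA1
    | succ n ih =>
        have hx : (X:Polynomial ℂ) ^ (n+1) = X * X ^ n := by ring
        rw [hx, ← hcomm, ih, mul_zero]
  exact ext_mono fun n => by rw [hXn n]; simp

lemma ker2 (h : ℝ) (hh : ∀ k : ℕ, h ≠ -(k : ℝ) / 2) (A : E)
    (h1 : opComm (l1 h) A = 0) (h2 : opComm (l0 h) A = (2:ℂ) • A) : A = 0 := by
  unfold opComm at h1 h2
  have h1' : ∀ p, l1 h (A p) = A (l1 h p) := by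
    intro p
    have := LinearMap.ext_iff.mp (sub_eq_zero.mp h1) p
    simpa [Module.End.mul_apply] using this
  have step1 : ∀ n : ℕ, A (X ^ n) = ((A (X ^ n)).coeff (n+2)) • X ^ (n+2) := by
    intro n
    have e2 := LinearMap.ext_iff.mp h2 (X ^ n)
    rw [LinearMap.sub_apply, Module.End.mul_apply, Module.End.mul_apply, LinearMap.smul_apply,
      l0_apply h n, map_smul, l0_apply_poly] at e2
    set p := A (X ^ n) with hp
    have ce : ∀ k : ℕ, (X * derivative p).coeff k = ((n:ℂ)+2) * p.coeff k := by
      intro k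
      have := congrArg (fun r => r.coeff k) e2
      simp only [coeff_add, coeff_sub, coeff_smul, smul_eq_mul] at this
      linear_combination this
    apply Polynomial.ext
    intro k
    rw [coeff_smul, coeff_X_pow, smul_eq_mul]
    by_cases hk : k = n + 2
    · subst hk
      simp
    · rw [if_neg hk, mul_zero]
      cases k with
      | zero =>
          have t := ce 0
          rw [coeff_X_mul_zero] at t
          have hne : ((n:ℂ) + 2) ≠ 0 := by
            have : ((n:ℂ)+2) = ((n+2:ℕ):ℂ) := by push_cast; ring
            rw [this, Ne, Nat.cast_eq_zero]
            omega
          exact (mul_eq_zero.mp t.symm).resolve_left hne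
      | succ j =>
          have t := ce (j+1)
          rw [coeff_X_mul, coeff_derivative] at t
          have hne : ((j:ℂ) + 1) - ((n:ℂ) + 2) ≠ 0 := by
            intro H
            apply hk
            have : ((j+1:ℕ):ℂ) = ((n+2:ℕ):ℂ) := by push_cast; linear_combination H
            exact_mod_cast this
          have t2 : (((j:ℂ) + 1) - ((n:ℂ) + 2)) * p.coeff (j+1) = 0 := by
            push_cast at t
            linear_combination t
          exact (mul_eq_zero.mp t2).resolve_left hne
  have hz : ∀ n : ℕ, A (X ^ n) = 0 := by
    intro n
    induction n with
    | zero =>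
        have e := h1' (X ^ 0)
        rw [l1_apply] at e
        have e' : (l1 h) (A ((X:Polynomial ℂ) ^ 0)) = 0 := by
          rw [e]
          norm_num
        rw [step1 0, map_smul, l1_apply, smul_smul] at e'
        have hs : ((A ((X:Polynomial ℂ) ^ 0)).coeff (0+2)
            * ((((0:ℕ)+2:ℕ):ℂ) * ((((0:ℕ)+2:ℕ):ℂ) - 1 + 2*h))) = 0 := by
          rcases smul_eq_zero.mp e' with hc | hX
          · exact hc
          · exact absurd hX (pow_ne_zero _ X_ne_zero)
        have hne : ((((0:ℕ)+2:ℕ):ℂ) * ((((0:ℕ)+2:ℕ):ℂ) - 1 + 2*h)) ≠ 0 := by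
          have h12 := nz h hh 1
          push_cast at h12 ⊢
          intro H
          rcases mul_eq_zero.mp H with H1 | H2
          · norm_num at H1
          · apply h12
            linear_combination H2
        have hc0 : (A ((X:Polynomial ℂ) ^ 0)).coeff (0+2) = 0 :=
          (mul_eq_zero.mp hs).resolve_right hne
        rw [step1 0, hc0, zero_smul]
    | succ n ih =>
        have e := h1' (X ^ (n+1))
        rw [l1_apply, show n+1-1 = n by omega, map_smul, ih, smul_zero] at e
        rw [step1 (n+1), map_smul, l1_apply, show n+1+2-1 = n+2 by omega, smul_smul] at e
        have hs := smul_eq_zero.mp e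
        have hne : ((((n+1)+2:ℕ):ℂ) * ((((n+1)+2:ℕ):ℂ) - 1 + 2*h)) ≠ 0 := by
          have hnn := nz h hh (n+2)
          push_cast at hnn ⊢
          intro H
          rcases mul_eq_zero.mp H with H1 | H2
          · have : ((n:ℂ) + 3) = ((n+3:ℕ):ℂ) := by push_cast; ring
            rw [show (n:ℂ)+1+2 = (n:ℂ)+3 by ring, this, Nat.cast_eq_zero] at H1
            omega
          · apply hnn
            linear_combination H2
        have hc0 : (A (X ^ (n+1))).coeff ((n+1)+2) = 0 := by
          rcases hs with hc | hX
          · exact (mul_eq_zero.mp hc).resolve_right hne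
          · exact absurd hX (pow_ne_zero _ X_ne_zero)
        rw [step1 (n+1), hc0, zero_smul]
  exact ext_mono fun n => by rw [hz n]; simp

/-- Uniqueness of the q_R-conformal symmetries: any family `Mₙ` of endomorphisms
of `ℂ[z]` with `M₋₁ = l₋₁`, `M₀ = l₀`, `M₁ = l₁` and `[lᵢ, Mₙ] = (i − n)·M_{i+n}` for
`i ∈ {−1,0,1}`, `n ∈ ℤ`, coincides with `Lₙ`. -/
theorem stmt_6 (h : ℝ) (hh : ∀ k : ℕ, h ≠ -(k : ℝ) / 2)
    (L : ℤ → E)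
    (hLpos : ∀ k : ℕ, L (k : ℤ) = Mz * Dop ^ (k + 1) + (((k : ℂ) + 1) * (h : ℂ)) • Dop ^ k)
    (hLneg : ∀ k : ℕ, 1 ≤ k → ∀ n : ℕ,
      L (-(k : ℤ)) (X ^ n) =
        (((n : ℂ) + ((k : ℂ) + 1) * (h : ℂ)) /
            ∏ i ∈ Finset.range k, ((n : ℂ) + 2 * h + (i : ℂ))) • X ^ (n + k))
    (M : ℤ → E)
    (hMm1 : M (-1) = lm1) (hM0 : M 0 = l0 h) (hM1 : M 1 = l1 h)
    (hMrel : ∀ n : ℤ,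
      opComm lm1 (M n) = ((-1 - n : ℤ) : ℂ) • M (-1 + n) ∧
      opComm (l0 h) (M n) = ((-n : ℤ) : ℂ) • M n ∧
      opComm (l1 h) (M n) = ((1 - n : ℤ) : ℂ) • M (1 + n)) :
    ∀ n : ℤ, M n = L n := by
  -- small values of L
  have hL0 : L 0 = l0 h := by
    have t := hLpos 0
    norm_num [pow_one] at t
    rw [t]
    rfl
  have hL1 : L 1 = Mz * Dop ^ 2 + (2 * (h:ℂ)) • Dop := by
    have t := hLpos 1
    norm_num [pow_one] at t
    exact t
  have hL1' : L 1 = l1 h := by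
    rw [hL1]
    unfold l1
    congr 1
    push_cast
    ring_nf
  have hL2 : L 2 = Mz * Dop ^ 3 + (3 * (h:ℂ)) • Dop ^ 2 := by
    have t := hLpos 2
    norm_num at t
    exact t
  have hLm1 : L (-1) = lm1 := Lm1_eq h hh L hLneg
  -- M 2 = L 2 via kernel argument
  have pos2 : M 2 = L 2 := by
    have c1 : opComm lm1 (M 2 - L 2) = 0 := by
      rw [opComm_sub]
      have t1 := (hMrel 2).1
      norm_num at t1
      have t2 : opComm lm1 (L 2) = (-3:ℂ) • L 1 := by
        rw [hL2, relm1pos2 h, hL1]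
      rw [t1, t2, hM1, hL1', sub_self]
    have c2 : opComm (l0 h) (M 2 - L 2) = (-2:ℂ) • (M 2 - L 2) := by
      rw [opComm_sub]
      have t1 := (hMrel 2).2.1
      norm_num at t1
      have t2 : opComm (l0 h) (L 2) = (-2:ℂ) • L 2 := by
        rw [hL2, rel0pos2 h]
      rw [t1, t2, smul_sub]
    exact sub_eq_zero.mp (ker1 h _ c1 c2)
  -- M (-2) = L (-2) via kernel argument
  have neg2 : M (-2) = L (-2) := by
    have c1 : opComm (l1 h) (M (-2) - L (-2)) = 0 := by
      rw [opComm_sub]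
      have t1 := (hMrel (-2)).2.2
      norm_num at t1
      have t2 := neg_l1_2 h hh L hLneg
      rw [t1, t2, hMm1, hLm1, sub_self]
    have c2 : opComm (l0 h) (M (-2) - L (-2)) = (2:ℂ) • (M (-2) - L (-2)) := by
      rw [opComm_sub]
      have t1 := (hMrel (-2)).2.1
      norm_num at t1
      have t2 : opComm (l0 h) (L (-2)) = (2:ℂ) • L (-2) := by
        have := neg_l0 h hh L hLneg 2 (by omega)
        norm_num at this
        exact this
      rw [t1, t2, smul_sub]
    exact sub_eq_zero.mp (ker2 h hh _ c1 c2)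
  -- positive chain
  have posAll : ∀ j : ℕ, M (j : ℤ) = L (j : ℤ) := by
    intro j
    induction j with
    | zero => norm_num [hM0, hL0]
    | succ n ih =>
        cases n with
        | zero => norm_num [hM1, hL1']
        | succ n =>
            cases n with
            | zero => norm_num [pos2]
            | succ m =>
                -- goal : M ↑(m+3) = L ↑(m+3), ih : M ↑(m+2) = L ↑(m+2)
                have t := (hMrel ((m:ℤ)+2)).2.2
                have hmz : ((m+2:ℕ):ℤ) = (m:ℤ)+2 := by push_cast; ring
                rw [hmz] at ih
                rw [ih] at t
                have hn2 := hLpos (m+2)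
                rw [show m+2+1 = m+3 by omega] at hn2
                push_cast at hn2
                rw [show ((m:ℂ)+2+1)*(h:ℂ) = ((m:ℂ)+3)*(h:ℂ) by ring] at hn2
                have hn3 := hLpos (m+3)
                rw [show m+3+1 = m+4 by omega] at hn3
                push_cast at hn3
                rw [show ((m:ℂ)+3+1)*(h:ℂ) = ((m:ℂ)+4)*(h:ℂ) by ring] at hn3
                have trel := rel1pos h m
                rw [← hn2, ← hn3] at trel
                rw [trel] at t
                have hcoeff : ((1 - ((m:ℤ)+2) : ℤ) : ℂ) = (-1:ℂ) - (m:ℂ) := by push_cast; ring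
                rw [hcoeff] at t
                have hne : ((-1:ℂ) - (m:ℂ)) ≠ 0 := by
                  intro H
                  have : ((m:ℂ) + 1) = 0 := by linear_combination -H
                  have : ((m+1:ℕ):ℂ) = 0 := by push_cast; linear_combination this
                  rw [Nat.cast_eq_zero] at this
                  omega
                have := smul_right_injective E hne t.symm
                -- this : L (↑m+3) = M (1 + (↑m+2))
                have hidx : (1 + ((m:ℤ)+2)) = ((m+3:ℕ):ℤ) := by push_cast; ring
                rw [hidx] at this
                have hidx2 : ((m:ℤ)+3) = ((m+3:ℕ):ℤ) := by push_cast; ring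
                rw [hidx2] at this
                rw [show m+1+1+1 = m+3 by omega]
                exact this
  -- negative chain
  have negAll : ∀ j : ℕ, M (-(j : ℤ)) = L (-(j : ℤ)) := by
    intro j
    induction j with
    | zero => norm_num [hM0, hL0]
    | succ n ih =>
        cases n with
        | zero => norm_num [hMm1, hLm1]
        | succ n =>
            cases n with
            | zero => norm_num [neg2]
            | succ m =>
                -- goal : M (-(↑(m+3))) = L (-(↑(m+3))), ih : M (-↑(m+2)) = L (-↑(m+2))
                have t := (hMrel (-((m:ℤ)+2))).1
                have hmz : (-((m+2:ℕ):ℤ)) = -((m:ℤ)+2) := by push_cast; ring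
                rw [hmz] at ih
                rw [ih] at t
                have trel := neg_lm1 h hh L hLneg (m+2) (by omega)
                rw [hmz] at trel
                rw [trel] at t
                have hc1 : (((m+2:ℕ)):ℂ) - 1 = (m:ℂ) + 1 := by push_cast; ring
                have hc2 : ((-1 - -((m:ℤ)+2) : ℤ) : ℂ) = (m:ℂ) + 1 := by push_cast; ring
                rw [hc1, hc2] at t
                have hne : ((m:ℂ) + 1) ≠ 0 := by
                  have : ((m:ℂ)+1) = ((m+1:ℕ):ℂ) := by push_cast; ring
                  rw [this, Ne, Nat.cast_eq_zero]
                  omega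
                have := smul_right_injective E hne t
                -- this : M (-1 + -(↑m+2)) = L (-(↑(m+2)) + -1)?? adjust indices
                have hidx : (-1 + -((m:ℤ)+2)) = -(((m+3:ℕ)):ℤ) := by push_cast; ring
                have hidx2 : (-(((m+2:ℕ):ℤ)+1)) = -(((m+3:ℕ)):ℤ) := by push_cast; ring
                rw [hidx, hidx2] at this
                rw [show m+1+1+1 = m+3 by omega]
                exact this.symm
  intro n
  obtain ⟨m, rfl | rfl⟩ := Int.eq_nat_or_neg n
  · exact posAll m
  · exact negAll m

end
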